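/- arXiv:2103.08402 — 5 statements merged into one kernel-verified Lean document; each statement's English description precedes it below -/
import Mathlib

section
/- Let S be a scoring function of the form S(p,y) = ∫_{(0,1)} S_θ(p,y) dν(θ) for a locally finite Borel measure ν, and let 0 < p < q < 1 with ν([p,q)) > 0 and ∫_{[p,q)} θ dν(θ) < ∞. Then the set H_S = {π ∈ [0,1] : E_π[S(p,Y) − S(q,Y)] ≤ 0} equals the interval [0, κ], where κ = (∫_{[p,q)} θ dν(θ)) / ν([p,q)). -/
open MeasureTheory

/-- The elementary scoring function `S_θ(p,y) = (θ − y)(1{p > θ} − 1{y > θ})`. -/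
noncomputable def elemScore (θ p y : ℝ) : ℝ :=
  (θ - y) * ((if θ < p then (1 : ℝ) else 0) - (if θ < y then (1 : ℝ) else 0))

/-- For a scoring function `S(p,y) = ∫_{(0,1)} S_θ(p,y) dν(θ)` with locally
finite mixing measure `ν`, forecasts `0 < p < q < 1` with `ν([p,q)) > 0` and
`θ` ν-integrable over `[p,q)`, the null hypothesis
`H_S = {π ∈ [0,1] : E_π[S(p,Y) − S(q,Y)] ≤ 0}` is the interval `[0, κ_ν([p,q))]`
where `κ_ν([p,q)) = ∫_{[p,q)} θ dν / ν([p,q))`. -/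
theorem null_hypothesis_interval (ν : Measure ℝ) [IsLocallyFiniteMeasure ν]
    (p q : ℝ) (hp : 0 < p) (hpq : p < q) (hq : q < 1)
    (hpos : 0 < ν (Set.Ico p q))
    (hIntθ : IntegrableOn (fun θ => θ) (Set.Ico p q) ν)
    (hIntp : ∀ y ∈ ({0, 1} : Set ℝ),
      IntegrableOn (fun θ => elemScore θ p y) (Set.Ioo 0 1) ν)
    (hIntq : ∀ y ∈ ({0, 1} : Set ℝ),
      IntegrableOn (fun θ => elemScore θ q y) (Set.Ioo 0 1) ν) :
    {π ∈ Set.Icc (0 : ℝ) 1 |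
        (1 - π) * ((∫ θ in Set.Ioo (0 : ℝ) 1, elemScore θ p 0 ∂ν)
              - ∫ θ in Set.Ioo (0 : ℝ) 1, elemScore θ q 0 ∂ν)
          + π * ((∫ θ in Set.Ioo (0 : ℝ) 1, elemScore θ p 1 ∂ν)
              - ∫ θ in Set.Ioo (0 : ℝ) 1, elemScore θ q 1 ∂ν) ≤ 0}
      = Set.Icc 0 ((∫ θ in Set.Ico p q, θ ∂ν) / (ν (Set.Ico p q)).toReal) := by
  have hsub : Set.Ico p q ⊆ Set.Ioo (0 : ℝ) 1 := fun x hx =>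
    ⟨lt_of_lt_of_le hp hx.1, lt_trans hx.2 hq⟩
  have hfin : ν (Set.Ico p q) < ⊤ :=
    lt_of_le_of_lt (measure_mono Set.Ico_subset_Icc_self) isCompact_Icc.measure_lt_top
  set m : ℝ := (ν (Set.Ico p q)).toReal with hm_def
  have hm : 0 < m := ENNReal.toReal_pos hpos.ne' hfin.ne
  set I : ℝ := ∫ θ in Set.Ico p q, θ ∂ν with hI_def
  have hIntc : IntegrableOn (fun _ : ℝ => (1 : ℝ)) (Set.Ico p q) ν :=
    integrableOn_const hfin.ne
  -- bounds on I
  have hI_nonneg : 0 ≤ I :=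
    setIntegral_nonneg measurableSet_Ico (fun x hx => le_of_lt (lt_of_lt_of_le hp hx.1))
  have hI_le : I ≤ m := by
    have := setIntegral_mono_on hIntθ hIntc measurableSet_Ico
      (fun x hx => le_of_lt (lt_trans hx.2 hq))
    simp at this; exact this
  -- y = 0 computation
  have h0 : (∫ θ in Set.Ioo (0 : ℝ) 1, elemScore θ p 0 ∂ν)
      - ∫ θ in Set.Ioo (0 : ℝ) 1, elemScore θ q 0 ∂ν = -I := by
    rw [← integral_sub (hIntp 0 (by simp)) (hIntq 0 (by simp))]
    have hcong : ∀ θ ∈ Set.Ioo (0 : ℝ) 1,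
        elemScore θ p 0 - elemScore θ q 0
          = Set.indicator (Set.Ico p q) (fun θ => -θ) θ := by
      intro θ hθ
      simp only [elemScore, Set.indicator, Set.mem_Ico, if_neg (not_lt.2 hθ.1.le)]
      by_cases h1 : θ < p
      · rw [if_pos h1, if_pos (lt_trans h1 hpq), if_neg (by intro h; exact absurd h.1 (not_le.2 h1))]
        ring
      · by_cases h2 : θ < q
        · rw [if_neg h1, if_pos h2, if_pos ⟨not_lt.1 h1, h2⟩]; ring
        · rw [if_neg h1, if_neg h2, if_neg (by intro h; exact absurd h.2 h2)]; ring
    rw [setIntegral_congr_fun measurableSet_Ioo hcong, setIntegral_indicator measurableSet_Ico,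
      Set.inter_eq_right.2 hsub, integral_neg]
  -- y = 1 computation
  have h1 : (∫ θ in Set.Ioo (0 : ℝ) 1, elemScore θ p 1 ∂ν)
      - ∫ θ in Set.Ioo (0 : ℝ) 1, elemScore θ q 1 ∂ν = m - I := by
    rw [← integral_sub (hIntp 1 (by simp)) (hIntq 1 (by simp))]
    have hcong : ∀ θ ∈ Set.Ioo (0 : ℝ) 1,
        elemScore θ p 1 - elemScore θ q 1
          = Set.indicator (Set.Ico p q) (fun θ => 1 - θ) θ := by
      intro θ hθ
      simp only [elemScore, Set.indicator, Set.mem_Ico, if_pos hθ.2]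
      by_cases h1 : θ < p
      · rw [if_pos h1, if_pos (lt_trans h1 hpq), if_neg (by intro h; exact absurd h.1 (not_le.2 h1))]
        ring
      · by_cases h2 : θ < q
        · rw [if_neg h1, if_pos h2, if_pos ⟨not_lt.1 h1, h2⟩]; ring
        · rw [if_neg h1, if_neg h2, if_neg (by intro h; exact absurd h.2 h2)]; ring
    rw [setIntegral_congr_fun measurableSet_Ioo hcong, setIntegral_indicator measurableSet_Ico,
      Set.inter_eq_right.2 hsub]
    rw [show (fun θ : ℝ => 1 - θ) = fun θ : ℝ => (1 : ℝ) - θ from rfl]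
    rw [integral_sub hIntc hIntθ]
    simp [hm_def, hI_def]; rfl
  have hκ_le : I / m ≤ 1 := (div_le_one hm).2 hI_le
  ext π
  simp only [Set.mem_setOf_eq, Set.mem_Icc, h0, h1]
  constructor
  · rintro ⟨⟨h0π, _⟩, hle⟩
    refine ⟨h0π, ?_⟩
    rw [le_div_iff₀ hm]
    nlinarith
  · rintro ⟨h0π, hle⟩
    have hπ1 : π ≤ 1 := le_trans hle hκ_le
    have : π * m ≤ I := (le_div_iff₀ hm).1 hle
    exact ⟨⟨h0π, hπ1⟩, by nlinarith⟩
end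

section
/- Let d: {0,1} → ℝ satisfy d(0) < 0 < d(1), and let π₀ ∈ (0,1) be the unique root of f(π) = (1−π)d(0) + π d(1). A function E: {0,1} → [0,∞) satisfies [(1−π)E(0) + π E(1) ≤ 1 if and only if f(π) ≤ 0, for all π ∈ [0,1]] if and only if there exists λ ∈ (0,1] such that E(y) = 1 + λ·d(y)/|d(0)|. -/
/-- Characterization of e-values for score-difference null hypotheses on a
binary outcome: with `d(0) < 0 < d(1)` (the score differences at the two
outcomes), a nonnegative `E : {0,1} → [0,∞)` satisfies
`(1−π)E(0) + πE(1) ≤ 1 ⟺ (1−π)d(0) + πd(1) ≤ 0` for all `π ∈ [0,1]`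
if and only if `E(y) = 1 + λ d(y)/|d(0)|` for some `λ ∈ (0,1]`. -/
theorem evalue_characterization (d E : Fin 2 → ℝ) (hd0 : d 0 < 0)
    (hd1 : 0 < d 1) (hE : ∀ y, 0 ≤ E y) :
    (∀ π ∈ Set.Icc (0 : ℝ) 1,
        ((1 - π) * E 0 + π * E 1 ≤ 1 ↔ (1 - π) * d 0 + π * d 1 ≤ 0))
      ↔ ∃ l ∈ Set.Ioc (0 : ℝ) 1, ∀ y, E y = 1 + l * d y / |d 0| := by
  have habs : |d 0| = -(d 0) := abs_of_neg hd0
  have hane : d 0 ≠ 0 := ne_of_lt hd0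
  have hba : 0 < d 1 - d 0 := by linarith
  constructor
  · intro h
    set π₀ : ℝ := -(d 0) / (d 1 - d 0) with hπ₀
    have hπ₀pos : 0 < π₀ := div_pos (by linarith) hba
    have hπ₀lt : π₀ < 1 := by rw [hπ₀, div_lt_one hba]; linarith
    have hfπ₀ : (1 - π₀) * d 0 + π₀ * d 1 = 0 := by
      rw [hπ₀]; field_simp; ring
    have hE0le : E 0 ≤ 1 := by
      have := (h 0 ⟨le_refl 0, zero_le_one⟩).mpr (by simpa using hd0.le)
      simpa using this
    have hE1gt : 1 < E 1 := by
      by_contra hle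
      push_neg at hle
      have := (h 1 ⟨zero_le_one, le_refl 1⟩).mp (by simpa using hle)
      simp at this; linarith
    set c := (1 - π₀) * E 0 + π₀ * E 1 with hc
    have hcle : c ≤ 1 := (h π₀ ⟨hπ₀pos.le, hπ₀lt.le⟩).mpr hfπ₀.le
    have hceq : c = 1 := by
      by_contra hne
      have hclt : c < 1 := lt_of_le_of_ne hcle hne
      have hEc : 0 < E 1 - c := by linarith
      set t := π₀ + (1 - c) * (1 - π₀) / (E 1 - c) with ht
      have htgt : π₀ < t := by
        rw [ht]
        have : 0 < (1 - c) * (1 - π₀) / (E 1 - c) :=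
          div_pos (mul_pos (by linarith) (by linarith)) hEc
        linarith
      have htle : t ≤ 1 := by
        rw [ht]
        have h1 : (1 - c) * (1 - π₀) / (E 1 - c) ≤ 1 - π₀ := by
          rw [div_le_iff₀ hEc]
          nlinarith
        linarith
      have hE1c : E 1 - c = (1 - π₀) * (E 1 - E 0) := by rw [hc]; ring
      have key : (t - π₀) * (E 1 - E 0) = 1 - c := by
        have hne' : E 1 - c ≠ 0 := ne_of_gt hEc
        rw [ht]
        have : (π₀ + (1 - c) * (1 - π₀) / (E 1 - c) - π₀) * (E 1 - E 0)
            = (1 - c) * ((1 - π₀) * (E 1 - E 0)) / (E 1 - c) := by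
          field_simp; ring
        rw [this, ← hE1c, mul_div_assoc, div_self hne', mul_one]
      have hgt : (1 - t) * E 0 + t * E 1 = 1 := by
        have expand : (1 - t) * E 0 + t * E 1 = c + (t - π₀) * (E 1 - E 0) := by
          rw [hc]; ring
        rw [expand, key]; ring
      have hft := (h t ⟨by linarith, htle⟩).mp hgt.le
      have hfpos : 0 < (1 - t) * d 0 + t * d 1 := by
        nlinarith [mul_pos (sub_pos.mpr htgt) hba]
      linarith
    have hE0lt : E 0 < 1 := by
      rcases lt_or_eq_of_le hE0le with h' | h'
      · exact h'
      · exfalso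
        rw [hc, ← h'] at hceq
        nlinarith [mul_pos hπ₀pos (sub_pos.mpr hE1gt)]
    refine ⟨1 - E 0, ⟨by linarith, by linarith [hE 0]⟩, ?_⟩
    rw [Fin.forall_fin_two]
    constructor
    · rw [habs, div_neg, mul_div_assoc, div_self hane, mul_one]; ring
    · rw [hc, hπ₀] at hceq
      field_simp at hceq
      rw [habs, div_neg]
      field_simp
      linarith
  · rintro ⟨l, ⟨hl0, hl1⟩, hEeq⟩ π ⟨hπ0, hπ1⟩
    rw [hEeq 0, hEeq 1]
    have key : (1 - π) * (1 + l * d 0 / |d 0|) + π * (1 + l * d 1 / |d 0|)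
        = 1 + (l / |d 0|) * ((1 - π) * d 0 + π * d 1) := by
      field_simp
      ring
    rw [key]
    have hpos : 0 < l / |d 0| := div_pos hl0 (abs_pos.mpr hane)
    constructor
    · intro h'
      nlinarith
    · intro h'
      nlinarith [mul_nonneg hpos.le (neg_nonneg.mpr h')]
end

section
/- Let d(0) < 0 < d(1), h = d(1)/d(0), and π₁ ∈ (0,1) with (1−π₁)d(0) + π₁ d(1) > 0. With λ₀ = π₁ + (1−π₁)/h and κ = d(0)/(d(0) − d(1)) ∈ (0,1), the e-value E(y) = 1 + λ₀ d(y)/|d(0)| satisfies E(0) = (1−π₁)/(1−κ) and E(1) = π₁/κ. -/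
/-- The growth-rate optimal e-value is a likelihood ratio: with
`d(0) < 0 < d(1)`, `h = d(1)/d(0)`, `λ₀ = π₁ + (1−π₁)/h` and
`κ = d(0)/(d(0) − d(1)) ∈ (0,1)`, the e-value `E(y) = 1 + λ₀ d(y)/|d(0)|`
satisfies `E(0) = (1−π₁)/(1−κ)` and `E(1) = π₁/κ`. -/
theorem grow_evalue_likelihood_ratio (d0 d1 π₁ h lam₀ κ : ℝ)
    (hd0 : d0 < 0) (hd1 : 0 < d1) (hπ₁ : π₁ ∈ Set.Ioo (0 : ℝ) 1)
    (halt : 0 < (1 - π₁) * d0 + π₁ * d1)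
    (hh : h = d1 / d0) (hlam₀ : lam₀ = π₁ + (1 - π₁) / h)
    (hκ : κ = d0 / (d0 - d1)) :
    κ ∈ Set.Ioo (0 : ℝ) 1 ∧
      1 + lam₀ * d0 / |d0| = (1 - π₁) / (1 - κ) ∧
      1 + lam₀ * d1 / |d0| = π₁ / κ := by
  obtain ⟨hπ0, hπ1⟩ := hπ₁
  have hdd : d0 - d1 < 0 := by linarith
  have habs : |d0| = -d0 := abs_of_neg hd0
  have hd0ne : d0 ≠ 0 := ne_of_lt hd0
  have hd1ne : d1 ≠ 0 := ne_of_gt hd1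
  have hddne : d0 - d1 ≠ 0 := ne_of_lt hdd
  subst hh hlam₀ hκ
  refine ⟨⟨div_pos_of_neg_of_neg hd0 hdd, ?_⟩, ?_, ?_⟩
  · rw [div_lt_one_of_neg hdd]; linarith
  · rw [habs]
    have h1κ : 1 - d0 / (d0 - d1) = -d1 / (d0 - d1) := by field_simp; ring
    rw [h1κ]
    field_simp
    ring
  · rw [habs]
    rw [div_div_eq_mul_div]
    field_simp
    ring
end

section
/- For forecasts 0 < p < q < 1, the set {π ∈ [0,1] : E_π[S_θ(p,Y) − S_θ(q,Y)] ≤ 0 for all θ ∈ [0,1]} equals [0, p]. -/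
/-- For `0 < p < q < 1`, the set of `π ∈ [0,1]` for which the expected
elementary score difference `E_π[S_θ(p,Y) − S_θ(q,Y)]` is nonpositive for all
`θ ∈ [0,1]` equals `[0, p]`. -/
theorem all_elementary_scores_null (p q : ℝ) (hp : 0 < p) (hpq : p < q)
    (hq : q < 1) :
    {π ∈ Set.Icc (0 : ℝ) 1 | ∀ θ ∈ Set.Icc (0 : ℝ) 1,
        (1 - π) * (elemScore θ p 0 - elemScore θ q 0)
          + π * (elemScore θ p 1 - elemScore θ q 1) ≤ 0}
      = Set.Icc 0 p := by
  ext π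
  simp only [Set.mem_setOf_eq, Set.mem_Icc]
  constructor
  · rintro ⟨⟨h0, h1⟩, H⟩
    refine ⟨h0, ?_⟩
    have := H p ⟨hp.le, (hpq.trans hq).le⟩
    simp only [elemScore] at this
    split_ifs at this <;> linarith
  · rintro ⟨h0, hπp⟩
    refine ⟨⟨h0, hπp.trans (hpq.trans hq).le⟩, fun θ ⟨hθ0, hθ1⟩ => ?_⟩
    simp only [elemScore]
    split_ifs <;> nlinarith
end

section
/- For the spherical score S(p,y) = 1 − |1−y−p|/‖p‖ with ‖p‖ = (2p² − 2p + 1)^{1/2}, and 0 < p < q < 1, the expected score difference E_π[S(p,Y) − S(q,Y)] under Y ~ Bernoulli(π) is nonpositive if and only if π ≤ ((q−1)‖p‖ − (p−1)‖q‖) / ((2q−1)‖p‖ − (2p−1)‖q‖). -/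
/-- The Euclidean norm `‖p‖ = √(2p² − 2p + 1)` of the vector `(p, 1−p)`. -/
noncomputable def probNorm (p : ℝ) : ℝ := Real.sqrt (2 * p ^ 2 - 2 * p + 1)

/-- The spherical score `S(p,y) = 1 − |1 − y − p| / ‖p‖`. -/
noncomputable def sphericalScore (p y : ℝ) : ℝ := 1 - |1 - y - p| / probNorm p

/-- For the spherical score and `0 < p < q < 1`, the expected score difference
under `Y ~ Bernoulli(π)` is nonpositive iff
`π ≤ ((q−1)‖p‖ − (p−1)‖q‖) / ((2q−1)‖p‖ − (2p−1)‖q‖)`. -/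
theorem spherical_dominance_iff (p q π : ℝ) (hp : 0 < p) (hpq : p < q)
    (hq : q < 1) (hπ : π ∈ Set.Icc (0 : ℝ) 1) :
    (1 - π) * (sphericalScore p 0 - sphericalScore q 0)
        + π * (sphericalScore p 1 - sphericalScore q 1) ≤ 0
      ↔ π ≤ ((q - 1) * probNorm p - (p - 1) * probNorm q)
          / ((2 * q - 1) * probNorm p - (2 * p - 1) * probNorm q) := by
  obtain ⟨hπ0, hπ1⟩ := hπ
  have hp1 : p < 1 := hpq.trans hq
  have hq0 : 0 < q := hp.trans hpq
  have hNp2 : probNorm p ^ 2 = 2 * p ^ 2 - 2 * p + 1 := Real.sq_sqrt (by nlinarith)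
  have hNq2 : probNorm q ^ 2 = 2 * q ^ 2 - 2 * q + 1 := Real.sq_sqrt (by nlinarith)
  have hNp : 0 < probNorm p := Real.sqrt_pos.mpr (by nlinarith)
  have hNq : 0 < probNorm q := Real.sqrt_pos.mpr (by nlinarith)
  set Np := probNorm p with hNpdef
  set Nq := probNorm q with hNqdef
  have key : ((2 * q - 1) * Np - (2 * p - 1) * Nq) * ((2 * q - 1) * Np + (2 * p - 1) * Nq)
      = ((2 * q - 1) ^ 2 - (2 * p - 1) ^ 2) / 2 := by
    linear_combination (2 * q - 1) ^ 2 * hNp2 - (2 * p - 1) ^ 2 * hNq2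
  have hD : 0 < (2 * q - 1) * Np - (2 * p - 1) * Nq := by
    rcases lt_or_ge (2 * q - 1) 0 with hb | hb
    · have hS : (2 * q - 1) * Np + (2 * p - 1) * Nq < 0 := by nlinarith
      nlinarith [key]
    · rcases lt_or_ge (2 * p - 1) 0 with ha | ha
      · nlinarith [mul_nonneg hb hNp.le, mul_pos (by linarith : (0:ℝ) < -(2 * p - 1)) hNq]
      · have hS : 0 < (2 * q - 1) * Np + (2 * p - 1) * Nq := by nlinarith
        nlinarith [key]
  have e1 : sphericalScore p 0 = 1 - (1 - p) / Np := by
    unfold sphericalScore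
    rw [show (1:ℝ) - 0 - p = 1 - p by ring, abs_of_pos (by linarith)]
  have e2 : sphericalScore p 1 = 1 - p / Np := by
    unfold sphericalScore
    rw [show (1:ℝ) - 1 - p = -p by ring, abs_neg, abs_of_pos hp]
  have e3 : sphericalScore q 0 = 1 - (1 - q) / Nq := by
    unfold sphericalScore
    rw [show (1:ℝ) - 0 - q = 1 - q by ring, abs_of_pos (by linarith)]
  have e4 : sphericalScore q 1 = 1 - q / Nq := by
    unfold sphericalScore
    rw [show (1:ℝ) - 1 - q = -q by ring, abs_neg, abs_of_pos hq0]
  rw [e1, e2, e3, e4, le_div_iff₀ hD]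
  have hE : ((1 - π) * ((1 - (1 - p) / Np) - (1 - (1 - q) / Nq))
        + π * ((1 - p / Np) - (1 - q / Nq))) * (Np * Nq)
      = ((1 - q) * Np - (1 - p) * Nq) + π * ((2 * q - 1) * Np - (2 * p - 1) * Nq) := by
    field_simp
    ring
  have hNN : (0:ℝ) < Np * Nq := mul_pos hNp hNq
  constructor
  · intro h
    have h2 := mul_le_mul_of_nonneg_right h hNN.le
    rw [zero_mul] at h2
    rw [hE] at h2
    linarith
  · intro h
    by_contra hc
    push_neg at hc
    have h2 := mul_pos hc hNN
    rw [hE] at h2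
    linarith
end
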